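/- Let (V,q) be a nondegenerate quadratic space and τ an isometry with (τ - id)² = 0. If W is a vector-space complement of R(τ) inside K(τ), then W is a regular subspace (W ∩ W^⊥ = {0}). -/

import Mathlib

theorem wall_stmt8 {F V : Type*} [Field F] [AddCommGroup V] [Module F V]
    [FiniteDimensional F V] (q : QuadraticForm F V)
    (hq : LinearMap.BilinForm.Nondegenerate (QuadraticMap.polarBilin q))
    (τ : V →ₗ[F] V) (hτ : ∀ x, q (τ x) = q x)
    (h2 : (τ - LinearMap.id) ∘ₗ (τ - LinearMap.id) = 0)
    (W : Submodule F V)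
    (hW1 : W ⊓ LinearMap.range (τ - LinearMap.id) = ⊥)
    (hW2 : W ⊔ LinearMap.range (τ - LinearMap.id) = LinearMap.ker (τ - LinearMap.id)) :
    W ⊓ LinearMap.BilinForm.orthogonal (QuadraticMap.polarBilin q) W = ⊥ := by
  set B := QuadraticMap.polarBilin q with hB
  set σ := τ - LinearMap.id with hσ
  have hrefl : B.IsRefl := by
    intro x y h
    rw [hB, QuadraticMap.polarBilin_apply_apply] at h ⊢
    rwa [QuadraticMap.polar_comm]
  have hiso : ∀ x y, B (τ x) (τ y) = B x y := by
    intro x y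
    simp only [hB, QuadraticMap.polarBilin_apply_apply, QuadraticMap.polar, ← map_add, hτ]
  have key : ∀ x y, σ y = 0 → B (σ x) y = 0 := by
    intro x y hy
    have hτy : τ y = y := sub_eq_zero.mp (by simpa [hσ, LinearMap.sub_apply] using hy)
    have hs : B (σ x) y = B (τ x) (τ y) - B x y := by
      rw [hτy, hσ]
      simp [LinearMap.sub_apply, map_sub]
    rw [hs, hiso, sub_self]
  have hKR : LinearMap.range σ = LinearMap.BilinForm.orthogonal B (LinearMap.ker σ) := by
    apply Submodule.eq_of_le_of_finrank_le
    · rintro _ ⟨x, rfl⟩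
      rw [LinearMap.BilinForm.mem_orthogonal_iff]
      intro m hm
      exact hrefl _ _ (key x m hm)
    · rw [LinearMap.BilinForm.finrank_orthogonal hq]
      have h3 := LinearMap.finrank_range_add_finrank_ker σ
      have h4 : Module.finrank F (LinearMap.ker σ) ≤ Module.finrank F V :=
        Submodule.finrank_le _
      omega
  rw [Submodule.eq_bot_iff]
  rintro w ⟨hwW, hwperp⟩
  have hwK : w ∈ LinearMap.ker σ := hW2 ▸ Submodule.mem_sup_left hwW
  have hwKperp : w ∈ LinearMap.BilinForm.orthogonal B (LinearMap.ker σ) := by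
    rw [LinearMap.BilinForm.mem_orthogonal_iff]
    intro k hk
    rw [← hW2] at hk
    obtain ⟨w', hw', r, hr, rfl⟩ := Submodule.mem_sup.mp hk
    obtain ⟨x, rfl⟩ := hr
    have hh1 : B w' w = 0 := hwperp w' hw'
    have hh2 : B (σ x) w = 0 := key x w hwK
    show B (w' + σ x) w = 0
    rw [map_add, LinearMap.add_apply, hh1, hh2, add_zero]
  rw [← hKR] at hwKperp
  have hmem : w ∈ W ⊓ LinearMap.range σ := ⟨hwW, hwKperp⟩
  rw [hW1] at hmem
  exact hmem
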